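/- Define the Hahn polynomial H_n^{(a,b,M)}(y) = ∑_{p=0}^{n} [(-n)_p (n+b+a+1)_p (-y)_p] / [(b+1)_p (-M)_p p!] and the Jacobi polynomial J_n^{(a,b)}(t) = ∑_{p=0}^{n} [(-n)_p (n+b+a+1)_p / ((b+1)_p p!)] t^p, where (x)_p denotes the rising factorial. Then for all real t and all integers 0 ≤ n ≤ M: ∑_{k=0}^{M} C(M,k) t^k (1-t)^{M-k} H_n^{(a,b,M)}(k) = J_n^{(a,b)}(t). -/

import Mathlib

open Finset

/-- Rising factorial (Pochhammer symbol) (x)_p on ℝ. -/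
noncomputable def poch (p : ℕ) (x : ℝ) : ℝ := (ascPochhammer ℝ p).eval x

/-- Hahn polynomial H_n^{(a,b,M)}(y) = ₃F₂(-n, n+b+a+1, -y; b+1, -M; 1). -/
noncomputable def hahn (a b : ℝ) (M n : ℕ) (y : ℝ) : ℝ :=
  ∑ p ∈ range (n + 1),
    (poch p (-(n : ℝ)) * poch p ((n : ℝ) + b + a + 1) * poch p (-y)) /
      (poch p (b + 1) * poch p (-(M : ℝ)) * (Nat.factorial p : ℝ))

/-- Jacobi polynomial J_n^{(a,b)}(t) = ₂F₁(-n, n+b+a+1; b+1; t). -/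
noncomputable def jacobi (a b : ℝ) (n : ℕ) (t : ℝ) : ℝ :=
  ∑ p ∈ range (n + 1),
    (poch p (-(n : ℝ)) * poch p ((n : ℝ) + b + a + 1)) /
      (poch p (b + 1) * (Nat.factorial p : ℝ)) * t ^ p

lemma nat_key {M k p : ℕ} (hpk : p ≤ k) (hkM : k ≤ M) :
    M.choose k * k.descFactorial p = M.descFactorial p * (M - p).choose (k - p) := by
  rw [Nat.descFactorial_eq_factorial_mul_choose, Nat.descFactorial_eq_factorial_mul_choose,
    ← Nat.mul_assoc, Nat.mul_comm (M.choose k), Nat.mul_assoc, Nat.mul_assoc,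
    Nat.choose_mul hpk]

lemma binom_desc (M p : ℕ) (hp : p ≤ M) (t : ℝ) :
    ∑ k ∈ range (M + 1), (M.choose k : ℝ) * t ^ k * (1 - t) ^ (M - k) * (k.descFactorial p : ℝ)
      = (M.descFactorial p : ℝ) * t ^ p := by
  have h1 : ∑ k ∈ range (M + 1), (M.choose k : ℝ) * t ^ k * (1 - t) ^ (M - k) * (k.descFactorial p : ℝ)
      = ∑ k ∈ Ico p (M + 1), (M.choose k : ℝ) * t ^ k * (1 - t) ^ (M - k) * (k.descFactorial p : ℝ) := by
    rw [range_eq_Ico]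
    refine (Finset.sum_subset (Finset.Ico_subset_Ico (Nat.zero_le p) le_rfl) ?_).symm
    intro k hk1 hk
    have : k < p := by
      simp only [mem_Ico] at hk1 hk
      omega
    rw [Nat.descFactorial_eq_zero_iff_lt.mpr this]
    simp
  rw [h1, Finset.sum_Ico_eq_sum_range]
  have h2 : M + 1 - p = M - p + 1 := by omega
  rw [h2]
  have h3 : ∀ j ∈ range (M - p + 1),
      (M.choose (p + j) : ℝ) * t ^ (p + j) * (1 - t) ^ (M - (p + j)) * ((p + j).descFactorial p : ℝ)
        = (M.descFactorial p : ℝ) * t ^ p * (((M - p).choose j : ℝ) * t ^ j * (1 - t) ^ (M - p - j)) := by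
    intro j hj
    simp only [mem_range] at hj
    have hkM : p + j ≤ M := by omega
    have key := nat_key (Nat.le_add_right p j) hkM
    rw [Nat.add_sub_cancel_left] at key
    have hc : (M.choose (p + j) : ℝ) * ((p + j).descFactorial p : ℝ)
        = (M.descFactorial p : ℝ) * ((M - p).choose j : ℝ) := by
      rw [← Nat.cast_mul, ← Nat.cast_mul, key]
    have hsub : M - (p + j) = M - p - j := by omega
    rw [hsub, pow_add]
    linear_combination (t ^ p * t ^ j * (1 - t) ^ (M - p - j)) * hc
  rw [Finset.sum_congr rfl h3, ← Finset.mul_sum]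
  have hbin : ∑ j ∈ range (M - p + 1), ((M - p).choose j : ℝ) * t ^ j * (1 - t) ^ (M - p - j) = 1 := by
    have h := add_pow t (1 - t) (M - p)
    simp only [add_sub_cancel, one_pow] at h
    conv_rhs => rw [h]
    apply Finset.sum_congr rfl
    intro j hj; ring
  rw [hbin, mul_one]

lemma poch_neg_nat (p k : ℕ) : poch p (-(k : ℝ)) = (-1) ^ p * (k.descFactorial p : ℝ) := by
  rw [poch, ascPochhammer_eval_neg_eq_descPochhammer, descPochhammer_eval_eq_descFactorial]

lemma descFactorial_pos' {p M : ℕ} (h : p ≤ M) : 0 < M.descFactorial p := by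
  rw [Nat.descFactorial_eq_factorial_mul_choose]
  exact Nat.mul_pos (Nat.factorial_pos p) (Nat.choose_pos h)

/-- Binomial averaging transforms Hahn polynomials into Jacobi polynomials. -/
theorem stmt_4 (a b : ℝ) (ha : -1 < a) (hb : -1 < b) (M : ℕ) (hM : 0 < M)
    (n : ℕ) (hn : n ≤ M) (t : ℝ) :
    ∑ k ∈ range (M + 1), (M.choose k : ℝ) * t ^ k * (1 - t) ^ (M - k) * hahn a b M n k =
      jacobi a b n t := by
  simp only [hahn, jacobi, Finset.mul_sum]
  rw [Finset.sum_comm]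
  apply Finset.sum_congr rfl
  intro p hp
  simp only [mem_range, Nat.lt_succ_iff] at hp
  have hpM : p ≤ M := hp.trans hn
  set A := poch p (-(n : ℝ)) * poch p ((n : ℝ) + b + a + 1) with hA
  set B := poch p (b + 1) with hB
  set P := poch p (-(M : ℝ)) with hPdef
  have hBne : B ≠ 0 := by
    have : (0:ℝ) < B := ascPochhammer_pos p (b + 1) (by linarith)
    linarith
  have hPne : P ≠ 0 := by
    rw [hPdef, poch_neg_nat]
    apply mul_ne_zero (pow_ne_zero _ (by norm_num))
    exact_mod_cast (descFactorial_pos' hpM).ne'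
  have hFne : (Nat.factorial p : ℝ) ≠ 0 := by exact_mod_cast (Nat.factorial_pos p).ne'
  have step1 : ∑ k ∈ range (M + 1),
      (M.choose k : ℝ) * t ^ k * (1 - t) ^ (M - k) * (A * poch p (-(k : ℝ)) / (B * P * (Nat.factorial p : ℝ)))
      = (A / (B * P * (Nat.factorial p : ℝ))) * ((-1) ^ p *
        ∑ k ∈ range (M + 1), (M.choose k : ℝ) * t ^ k * (1 - t) ^ (M - k) * (k.descFactorial p : ℝ)) := by
    rw [Finset.mul_sum, Finset.mul_sum]
    apply Finset.sum_congr rfl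
    intro k hk
    rw [poch_neg_nat]
    ring
  rw [step1, binom_desc M p hpM t]
  have hPval : P = (-1) ^ p * (M.descFactorial p : ℝ) := by rw [hPdef, poch_neg_nat]
  rw [hPval] at hPne ⊢
  have hDne : ((M.descFactorial p : ℝ)) ≠ 0 := by
    exact_mod_cast (descFactorial_pos' hpM).ne'
  field_simp
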